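/- For every multiplier λ, every t ∈ {1,…,T+1}, every joint state x ∈ ∏_{i=1}^n S_i and every v ∈ V, the relaxed value is a lower bound on the constrained value: L_t(x,v;λ) ≤ J_t(x,v). In particular, with t = 1 this is the weak-duality lower bound L_1(x_1,v_1;λ) ≤ J_1(x_1,v_1) of Theorem 3.2(1). -/

import Mathlib

open Finset

/-- Weakly coupled stochastic unit commitment setup. -/
structure UCSetup (T n : ℕ) (V D : Type) [Fintype V] [Fintype D]
    (S C : Fin n → Type) where
  P : Fin T → V → D → ℝ
  ftil : Fin T → V → D → V
  d : V → ℝ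
  A : Fin T → (i : Fin n) → S i → Finset (C i)
  z : (i : Fin n) → C i → ℝ
  g : Fin T → (i : Fin n) → S i → C i → ℝ
  f : Fin T → (i : Fin n) → S i → C i → D → S i
  A_nonempty : ∀ t i s, (A t i s).Nonempty
  P_nonneg : ∀ t v w, 0 ≤ P t v w
  P_sum_one : ∀ t v, (∑ w, P t v w) = 1

namespace UCSetup

variable {T n : ℕ} {V D : Type} [Fintype V] [Fintype D] {S C : Fin n → Type}

/-- Joint admissible action set at stage `t` in joint state `x`. -/
noncomputable def acts (u : UCSetup T n V D S C) (t : Fin T) (x : ∀ i, S i) :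
    Finset (∀ i, C i) :=
  Fintype.piFinset fun i => u.A t i (x i)

lemma acts_nonempty (u : UCSetup T n V D S C) (t : Fin T) (x : ∀ i, S i) :
    (u.acts t x).Nonempty :=
  Fintype.piFinset_nonempty.mpr fun i => u.A_nonempty t i (x i)

/-- Joint relaxed (Lagrangian) value functions, 0-indexed: stage `t ∈ {0,…,T-1}`
corresponds to period `t+1`, and `L T = 0` is the terminal value (period `T+1`). -/
noncomputable def L (u : UCSetup T n V D S C) (lam : Fin T → V → ℝ) (t : ℕ) :
    (∀ i, S i) → V → ℝ :=
  if h : t < T then fun x v =>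
    (u.acts ⟨t, h⟩ x).inf' (u.acts_nonempty ⟨t, h⟩ x) fun a =>
      (∑ i, u.g ⟨t, h⟩ i (x i) (a i))
        + lam ⟨t, h⟩ v * ((∑ i, u.z i (a i)) - u.d v)
        + ∑ w, u.P ⟨t, h⟩ v w *
            u.L lam (t + 1) (fun i => u.f ⟨t, h⟩ i (x i) (a i) w) (u.ftil ⟨t, h⟩ v w)
  else fun _ _ => 0
termination_by T - t
decreasing_by omega

/-- Per-generator relaxed value functions. -/
noncomputable def Li (u : UCSetup T n V D S C) (lam : Fin T → V → ℝ) (i : Fin n)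
    (t : ℕ) : S i → V → ℝ :=
  if h : t < T then fun x v =>
    (u.A ⟨t, h⟩ i x).inf' (u.A_nonempty ⟨t, h⟩ i x) fun a =>
      u.g ⟨t, h⟩ i x a + lam ⟨t, h⟩ v * u.z i a
        + ∑ w, u.P ⟨t, h⟩ v w *
            u.Li lam i (t + 1) (u.f ⟨t, h⟩ i x a w) (u.ftil ⟨t, h⟩ v w)
  else fun _ _ => 0
termination_by T - t
decreasing_by omega

/-- Expected discounted multiplier-weighted demand along the summary chain:
`M t v = ∑_{r=t}^{T-1} E[λ_r(v_r)·d(v_r) | v_t = v]`. -/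
noncomputable def M (u : UCSetup T n V D S C) (lam : Fin T → V → ℝ) (t : ℕ) :
    V → ℝ :=
  if h : t < T then fun v =>
    lam ⟨t, h⟩ v * u.d v
      + ∑ w, u.P ⟨t, h⟩ v w * u.M lam (t + 1) (u.ftil ⟨t, h⟩ v w)
  else fun _ => 0
termination_by T - t
decreasing_by omega

open Classical in
/-- Feasible joint action set: admissible actions whose total production meets demand. -/
noncomputable def feas (u : UCSetup T n V D S C) (t : Fin T) (x : ∀ i, S i) (v : V) :
    Finset (∀ i, C i) :=
  (u.acts t x).filter fun a => (∑ i, u.z i (a i)) = u.d v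

/-- Constrained value functions (demand constraint enforced). -/
noncomputable def J (u : UCSetup T n V D S C)
    (hfeas : ∀ t x v, (u.feas t x v).Nonempty) (t : ℕ) : (∀ i, S i) → V → ℝ :=
  if h : t < T then fun x v =>
    (u.feas ⟨t, h⟩ x v).inf' (hfeas ⟨t, h⟩ x v) fun a =>
      (∑ i, u.g ⟨t, h⟩ i (x i) (a i))
        + ∑ w, u.P ⟨t, h⟩ v w *
            u.J hfeas (t + 1) (fun i => u.f ⟨t, h⟩ i (x i) (a i) w) (u.ftil ⟨t, h⟩ v w)
  else fun _ _ => 0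
termination_by T - t
decreasing_by omega

/-- Lagrangian value functions of a fixed Markov policy `π`. -/
noncomputable def W (u : UCSetup T n V D S C) (lam : Fin T → V → ℝ)
    (π : Fin T → (∀ i, S i) → V → ∀ i, C i) (t : ℕ) : (∀ i, S i) → V → ℝ :=
  if h : t < T then fun x v =>
    (∑ i, u.g ⟨t, h⟩ i (x i) (π ⟨t, h⟩ x v i))
      + lam ⟨t, h⟩ v * ((∑ i, u.z i (π ⟨t, h⟩ x v i)) - u.d v)
      + ∑ w, u.P ⟨t, h⟩ v w *
          u.W lam π (t + 1) (fun i => u.f ⟨t, h⟩ i (x i) (π ⟨t, h⟩ x v i) w)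
            (u.ftil ⟨t, h⟩ v w)
  else fun _ _ => 0
termination_by T - t
decreasing_by omega

/-- A Markov policy is admissible if each component action is in the admissible set. -/
def IsPolicy (u : UCSetup T n V D S C)
    (π : Fin T → (∀ i, S i) → V → ∀ i, C i) : Prop :=
  ∀ t x v i, π t x v i ∈ u.A t i (x i)

end UCSetup

/-- **Theorem 3.2(1) (weak duality, stagewise).**
For every multiplier `λ` and every stage `t` (0-indexed, `t ≤ T`), joint state `x`
and summary state `v`, the relaxed value is a lower bound on the constrained value:
`L_t(x,v;λ) ≤ J_t(x,v)`.  With `t = 0` (period 1) this is `L_1 ≤ J_1`. -/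
theorem relaxed_le_constrained
    {T n : ℕ} (hT : 1 ≤ T) (hn : 1 ≤ n)
    {V D : Type} [Fintype V] [Fintype D] [Nonempty V] [Nonempty D]
    {S C : Fin n → Type} [∀ i, Fintype (S i)] [∀ i, Fintype (C i)]
    [∀ i, Nonempty (S i)] [∀ i, Nonempty (C i)]
    (u : UCSetup T n V D S C)
    (hfeas : ∀ t x v, (u.feas t x v).Nonempty)
    (lam : Fin T → V → ℝ) (t : ℕ) (ht : t ≤ T) (x : ∀ i, S i) (v : V) :
    u.L lam t x v ≤ u.J hfeas t x v := by

  -- induction on T - t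
  rcases Nat.le.dest ht with ⟨k, hk⟩
  induction k generalizing t x v with
  | zero =>
    have hT' : t = T := by omega
    subst hT'
    rw [UCSetup.L, UCSetup.J]
    simp
  | succ k ih =>
    have h : t < T := by omega
    rw [UCSetup.L, UCSetup.J, dif_pos h, dif_pos h]
    apply Finset.le_inf'
    intro a ha
    have hmem : a ∈ u.acts ⟨t, h⟩ x := (Finset.mem_filter.mp ha).1
    have hz : (∑ i, u.z i (a i)) = u.d v := (Finset.mem_filter.mp ha).2
    refine le_trans (Finset.inf'_le _ hmem) ?_
    rw [hz]
    simp only [sub_self, mul_zero, add_zero]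
    apply add_le_add le_rfl
    apply Finset.sum_le_sum
    intro w _
    apply mul_le_mul_of_nonneg_left _ (u.P_nonneg ⟨t, h⟩ v w)
    exact ih (t+1) (by omega) _ _ (by omega)
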